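/- Let p > 1, let α, β, δ > 0 and γ ∈ ℝ, and let f : ℝ → ℝ be continuously differentiable with f(x) > δ for all x ≥ 0. Assume that for all x ≥ 0, f'(x) ≥ α · ∫₀ˣ f(y)^{(1-p)/2} dy - β·√(f(x)) - γ. Then there exists a constant C (depending only on α, β, γ, δ and p) such that for every z > 0, the Lebesgue measure of the set {x > 0 : f(x) ≤ z} is at most C · z^{p/2}. -/

import Mathlib

open MeasureTheory Real
open scoped ENNReal

noncomputable section

open Set Filter Topology


lemma meas_inter_Ioc_ne_top (S : Set ℝ) (x w : ℝ) : volume (S ∩ Set.Ioc x w) ≠ ⊤ :=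
  ((measure_mono Set.inter_subset_right).trans_lt measure_Ioc_lt_top).ne

lemma meas_split (S : Set ℝ) (hS : MeasurableSet S) {a x w : ℝ} (hax : a ≤ x) (hxw : x ≤ w) :
    (volume (S ∩ Set.Ioc a w)).toReal
      = (volume (S ∩ Set.Ioc a x)).toReal + (volume (S ∩ Set.Ioc x w)).toReal := by
  rw [← ENNReal.toReal_add (meas_inter_Ioc_ne_top S a x) (meas_inter_Ioc_ne_top S x w),
    ← measure_union ?_ (hS.inter measurableSet_Ioc)]
  · rw [← Set.inter_union_distrib_left, Set.Ioc_union_Ioc_eq_Ioc hax hxw]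
  · exact (Set.Ioc_disjoint_Ioc_of_le le_rfl).mono Set.inter_subset_right Set.inter_subset_right

lemma meas_le (S : Set ℝ) {x w : ℝ} (hxw : x ≤ w) :
    (volume (S ∩ Set.Ioc x w)).toReal ≤ w - x := by
  have h : volume (S ∩ Set.Ioc x w) ≤ volume (Set.Ioc x w) := measure_mono Set.inter_subset_right
  have h2 : (volume (S ∩ Set.Ioc x w)).toReal ≤ (volume (Set.Ioc x w)).toReal :=
    ENNReal.toReal_le_toReal (meas_inter_Ioc_ne_top S x w) measure_Ioc_lt_top.ne |>.2 h
  rwa [Real.volume_Ioc, ENNReal.toReal_ofReal (sub_nonneg.2 hxw)] at h2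

lemma vcont (S : Set ℝ) (hS : MeasurableSet S) (a : ℝ) :
    ContinuousOn (fun x => (volume (S ∩ Set.Ioc a x)).toReal) (Set.Ici a) := by
  refine LipschitzOnWith.continuousOn (K := 1) ?_
  rw [lipschitzOnWith_iff_dist_le_mul]
  intro x hx y hy
  rw [NNReal.coe_one, one_mul, Real.dist_eq, Real.dist_eq]
  rcases le_total y x with h | h
  · rw [meas_split S hS hy h, add_sub_cancel_left, abs_of_nonneg ENNReal.toReal_nonneg]
    exact (meas_le S h).trans (le_abs_self _)
  · rw [meas_split S hS hx h, sub_add_cancel_left, abs_neg,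
      abs_of_nonneg ENNReal.toReal_nonneg, abs_sub_comm]
    exact (meas_le S h).trans (le_abs_self _)

lemma key_bound (f : ℝ → ℝ) (hfc : Continuous f) (hfd : Differentiable ℝ f)
    (z K a b : ℝ) (hK : 0 < K) (hab : a ≤ b)
    (hd : ∀ x ∈ Set.Icc a b, f x ≤ z → K ≤ deriv f x) :
    K * (volume ({t : ℝ | f t ≤ z} ∩ Set.Ioc a b)).toReal ≤ min (f b) z - min (f a) z := by
  set S : Set ℝ := {t | f t ≤ z} with hSdef
  have hS : MeasurableSet S := measurableSet_le hfc.measurable measurable_const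
  set v : ℝ → ℝ := fun x => (volume (S ∩ Set.Ioc a x)).toReal with hv
  set F : ℝ → ℝ := fun x => K * v x - min (f x) z with hF
  have hva : v a = 0 := by simp [hv]
  have hslopeT : ∀ x : ℝ, Tendsto (slope f x) (𝓝[>] x) (𝓝 (deriv f x)) := fun x =>
    ((hasDerivAt_iff_tendsto_slope).1 (hfd x).hasDerivAt).mono_left
      (nhdsWithin_mono x fun y hy => ne_of_gt hy)
  have key : F b ≤ F a := by
    refine image_le_of_liminf_slope_right_le_deriv_boundary
      (f := F) (a := a) (b := b) (B := fun _ => F a) (B' := fun _ => 0)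
      ?_ le_rfl continuousOn_const (fun x _ => hasDerivWithinAt_const x _ (F a)) ?_
      (Set.right_mem_Icc.2 hab)
    · apply ContinuousOn.sub
      · exact continuousOn_const.mul ((vcont S hS a).mono Set.Icc_subset_Ici_self)
      · exact (hfc.min continuous_const).continuousOn
    · intro x hx r hr
      have hxa : a ≤ x := hx.1
      apply Filter.Eventually.frequently
      have hr' : (0:ℝ) < r := hr
      rcases lt_or_ge (f x) z with hlt | hge
      · have hdx : K ≤ deriv f x := hd x ⟨hx.1, hx.2.le⟩ hlt.le
        have h1 : ∀ᶠ w in 𝓝[>] x, f w < z :=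
          eventually_nhdsWithin_of_eventually_nhds
            ((isOpen_lt hfc continuous_const).eventually_mem hlt)
        have h2 : ∀ᶠ w in 𝓝[>] x, K - r < slope f x w :=
          (hslopeT x).eventually (eventually_gt_nhds (by linarith))
        filter_upwards [h1, h2, self_mem_nhdsWithin] with w hw1 hw2 hw3
        have hxw : x < w := hw3
        rw [slope_def_field, div_lt_iff₀ (sub_pos.2 hxw)]
        have hsplit : v w = v x + (volume (S ∩ Set.Ioc x w)).toReal := meas_split S hS hxa hxw.le
        have hm1 : (volume (S ∩ Set.Ioc x w)).toReal ≤ w - x := meas_le S hxw.le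
        have hminw : min (f w) z = f w := min_eq_left hw1.le
        have hminx : min (f x) z = f x := min_eq_left hlt.le
        rw [slope_def_field] at hw2
        have hfw : (K - r) * (w - x) < f w - f x := (lt_div_iff₀ (sub_pos.2 hxw)).1 hw2
        simp only [hF, hminw, hminx, hsplit]
        nlinarith [hK.le]
      · have hev : ∀ᶠ w in 𝓝[>] x, z < f w := by
          rcases eq_or_lt_of_le hge with heq | hgt
          · have hdx : K ≤ deriv f x := hd x ⟨hx.1, hx.2.le⟩ heq.ge
            have h2 : ∀ᶠ w in 𝓝[>] x, 0 < slope f x w :=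
              (hslopeT x).eventually (eventually_gt_nhds (by linarith))
            filter_upwards [h2, self_mem_nhdsWithin] with w hw hxw
            rw [slope_def_field] at hw
            have hwx : (0:ℝ) < w - x := sub_pos.2 hxw
            have := (lt_div_iff₀ hwx).1 hw
            rw [heq]; linarith
          · exact eventually_nhdsWithin_of_eventually_nhds
              ((isOpen_lt continuous_const hfc).eventually_mem hgt)
        obtain ⟨u, hu, hsub⟩ := (mem_nhdsGT_iff_exists_Ioc_subset).1 hev
        have hFeq : ∀ᶠ w in 𝓝[>] x, F w = F x := by
          filter_upwards [Ioc_mem_nhdsGT_of_mem ⟨le_rfl, hu⟩] with w hw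
          have hxw : x < w := hw.1
          have hempty : S ∩ Set.Ioc x w = ∅ :=
            Set.eq_empty_iff_forall_notMem.2 fun t ht =>
              absurd (show f t ≤ z from ht.1) (not_le.2 (hsub ⟨ht.2.1, ht.2.2.trans hw.2⟩))
          have hsplit : v w = v x + (volume (S ∩ Set.Ioc x w)).toReal :=
            meas_split S hS hxa hxw.le
          rw [hempty] at hsplit
          simp only [measure_empty, ENNReal.toReal_zero, add_zero] at hsplit
          have hminw : min (f w) z = z := min_eq_right (hsub ⟨hw.1, hw.2⟩).le
          have hminx : min (f x) z = z := min_eq_right hge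
          simp only [hF, hsplit, hminw, hminx]
        filter_upwards [hFeq] with w hw
        rw [slope_def_field, hw, sub_self, zero_div]
        exact hr
  have h2 : K * v b - min (f b) z ≤ K * v a - min (f a) z := key
  rw [hva, mul_zero, zero_sub] at h2
  linarith


lemma integral_lower (f : ℝ → ℝ) (hfc : Continuous f) {q z δ : ℝ} (hq : q ≤ 0) (hδ : 0 < δ)
    (hfδ : ∀ y, 0 ≤ y → δ < f y) {x : ℝ} (hx : 0 ≤ x) :
    z ^ q * (volume ({t : ℝ | f t ≤ z} ∩ Set.Ioc 0 x)).toReal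
      ≤ ∫ y in (0:ℝ)..x, f y ^ q := by
  set S : Set ℝ := {t | f t ≤ z} with hSdef
  have hS : MeasurableSet S := measurableSet_le hfc.measurable measurable_const
  rw [intervalIntegral.integral_of_le hx]
  have hpos : ∀ y ∈ Set.Icc 0 x, 0 < f y := fun y hy => hδ.trans (hfδ y hy.1)
  have hint : IntegrableOn (fun y => f y ^ q) (Set.Ioc 0 x) := by
    have hco : ContinuousOn (fun y => f y ^ q) (Set.Icc 0 x) :=
      hfc.continuousOn.rpow_const fun y hy => Or.inl (ne_of_gt (hpos y hy))
    exact hco.integrableOn_Icc.mono_set Set.Ioc_subset_Icc_self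
  have hind : IntegrableOn (S.indicator fun _ => z ^ q) (Set.Ioc 0 x) :=
    (integrableOn_const measure_Ioc_lt_top.ne).indicator hS
  have hle : ∀ y ∈ Set.Ioc 0 x, S.indicator (fun _ => z ^ q) y ≤ f y ^ q := by
    intro y hy
    by_cases hyS : y ∈ S
    · rw [Set.indicator_of_mem hyS]
      exact Real.rpow_le_rpow_of_nonpos (hpos y ⟨hy.1.le, hy.2⟩) hyS hq
    · rw [Set.indicator_of_notMem hyS]
      exact Real.rpow_nonneg (hpos y ⟨hy.1.le, hy.2⟩).le q
  calc z ^ q * (volume (S ∩ Set.Ioc 0 x)).toReal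
      = ∫ y in Set.Ioc 0 x, S.indicator (fun _ => z ^ q) y := by
        rw [MeasureTheory.integral_indicator hS, MeasureTheory.setIntegral_const, measureReal_def,
          Measure.restrict_apply hS, smul_eq_mul, mul_comm]
    _ ≤ ∫ y in Set.Ioc 0 x, f y ^ q := setIntegral_mono_on hind hint measurableSet_Ioc hle

theorem sublevel_estimate (p α β γ δ : ℝ) (hp : 1 < p)
    (hα : 0 < α) (hβ : 0 < β) (hδ : 0 < δ)
    (f : ℝ → ℝ) (hf : ContDiff ℝ 1 f)
    (hfδ : ∀ x : ℝ, 0 ≤ x → δ < f x)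
    (hineq : ∀ x : ℝ, 0 ≤ x →
      deriv f x ≥ α * (∫ y in (0 : ℝ)..x, f y ^ ((1 - p) / 2)) - β * Real.sqrt (f x) - γ) :
    ∃ C : ℝ, ∀ z : ℝ, 0 < z →
      volume {x : ℝ | 0 < x ∧ f x ≤ z} ≤ ENNReal.ofReal (C * z ^ (p / 2)) := by
  have hfc : Continuous f := hf.continuous
  have hfd : Differentiable ℝ f := hf.differentiable one_ne_zero
  set C : ℝ := (δ ^ (-(1/2) : ℝ) + δ ^ ((1-p)/2) + β + |γ| * δ ^ (-(1/2) : ℝ)) / α + 1 with hC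
  refine ⟨C, fun z hz => ?_⟩
  by_cases hzδ : z ≤ δ
  · have hempty : {x : ℝ | 0 < x ∧ f x ≤ z} = ∅ :=
      Set.eq_empty_iff_forall_notMem.2 fun x hx =>
        absurd hx.2 (not_le.2 (lt_of_le_of_lt hzδ (hfδ x hx.1.le)))
    rw [hempty, measure_empty]
    exact zero_le
  push_neg at hzδ
  have hz0 : (0:ℝ) < z := hδ.trans hzδ
  set K : ℝ := max 1 (z ^ (1 - p/2)) with hKdef
  have hK1 : (1:ℝ) ≤ K := le_max_left _ _
  have hKpos : (0:ℝ) < K := lt_of_lt_of_le one_pos hK1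
  have hKz : z ^ (1 - p/2) ≤ K := le_max_right _ _
  have hKzpos : (0:ℝ) < z ^ (1 - p/2) := Real.rpow_pos_of_pos hz0 _
  set m₀ : ℝ := (K + β * Real.sqrt z + |γ|) * z ^ ((p-1)/2) / α with hm₀
  have hsqz : (0:ℝ) ≤ β * Real.sqrt z := mul_nonneg hβ.le (Real.sqrt_nonneg z)
  have hm₀0 : 0 ≤ m₀ := by
    apply div_nonneg _ hα.le
    apply mul_nonneg _ (Real.rpow_nonneg hz0.le _)
    have := abs_nonneg γ
    linarith
  set S : Set ℝ := {t : ℝ | f t ≤ z} with hSdef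
  have hS : MeasurableSet S := measurableSet_le hfc.measurable measurable_const
  have hzK : 0 ≤ z / K := div_nonneg hz0.le hKpos.le
  -- main bound for every b
  have Hb : ∀ b : ℝ, volume (S ∩ Set.Ioc 0 b) ≤ ENNReal.ofReal (m₀ + z / K) := by
    intro b
    rcases le_or_gt b 0 with hb | hb
    · rw [Set.Ioc_eq_empty (by exact fun h => absurd hb (not_le.2 h)), Set.inter_empty,
        measure_empty]
      exact zero_le
    have hfin := meas_inter_Ioc_ne_top S 0 b
    rw [← ENNReal.ofReal_toReal hfin]
    apply ENNReal.ofReal_le_ofReal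
    by_cases hub : (volume (S ∩ Set.Ioc 0 b)).toReal ≤ m₀
    · linarith
    push_neg at hub
    set u : ℝ → ℝ := fun x => (volume (S ∩ Set.Ioc 0 x)).toReal with hu
    have hucont : ContinuousOn u (Set.Icc 0 b) := (vcont S hS 0).mono Set.Icc_subset_Ici_self
    have hu0 : u 0 = 0 := by simp [hu]
    obtain ⟨x₀, hx₀mem, hx₀⟩ : ∃ x₀ ∈ Set.Icc 0 b, u x₀ = m₀ := by
      have h := intermediate_value_Icc hb.le hucont
      refine h ⟨?_, hub.le⟩
      rw [hu0]; exact hm₀0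
    have hdb : ∀ x ∈ Set.Icc x₀ b, f x ≤ z → K ≤ deriv f x := by
      intro x hx hfx
      have hx0 : (0:ℝ) ≤ x := hx₀mem.1.trans hx.1
      have hq : (1-p)/2 ≤ 0 := by linarith
      have hintlb : z ^ ((1-p)/2) * u x ≤ ∫ y in (0:ℝ)..x, f y ^ ((1-p)/2) := by
        have := integral_lower f hfc (z := z) hq hδ hfδ hx0
        rw [← hSdef] at this
        exact this
      have humono : m₀ ≤ u x := by
        rw [← hx₀]
        have hsp := meas_split S hS hx₀mem.1 hx.1
        have := ENNReal.toReal_nonneg (a := volume (S ∩ Set.Ioc x₀ x))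
        simp only [hu]
        linarith
      have hzq : (0:ℝ) < z ^ ((1-p)/2) := Real.rpow_pos_of_pos hz0 _
      have hzz : z ^ ((1-p)/2) * z ^ ((p-1)/2) = 1 := by
        rw [← Real.rpow_add hz0, show (1-p)/2 + (p-1)/2 = 0 by ring, Real.rpow_zero]
      have p0 : z ^ ((1-p)/2) * m₀ = (K + β * Real.sqrt z + |γ|) / α := by
        rw [hm₀, mul_div_assoc',
          show z ^ ((1-p)/2) * ((K + β * Real.sqrt z + |γ|) * z ^ ((p-1)/2))
            = (K + β * Real.sqrt z + |γ|) * (z ^ ((1-p)/2) * z ^ ((p-1)/2)) from by ring,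
          hzz, mul_one]
      have p1 : α * (z ^ ((1-p)/2) * m₀) = K + β * Real.sqrt z + |γ| := by
        rw [p0]; field_simp
      have p2 : z ^ ((1-p)/2) * m₀ ≤ z ^ ((1-p)/2) * u x :=
        mul_le_mul_of_nonneg_left humono hzq.le
      have p3 : α * (z ^ ((1-p)/2) * u x) ≤ α * ∫ y in (0:ℝ)..x, f y ^ ((1-p)/2) :=
        mul_le_mul_of_nonneg_left hintlb hα.le
      have p2' : α * (z ^ ((1-p)/2) * m₀) ≤ α * (z ^ ((1-p)/2) * u x) :=
        mul_le_mul_of_nonneg_left p2 hα.le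
      have p4 : β * Real.sqrt (f x) ≤ β * Real.sqrt z :=
        mul_le_mul_of_nonneg_left (Real.sqrt_le_sqrt hfx) hβ.le
      have p5 : γ ≤ |γ| := le_abs_self γ
      have h6 := hineq x hx0
      linarith
    have hkey := key_bound f hfc hfd z K x₀ b hKpos hx₀mem.2 hdb
    rw [← hSdef] at hkey
    have hminb : min (f b) z ≤ z := min_le_right _ _
    have hminx : δ ≤ min (f x₀) z := le_min (hfδ x₀ hx₀mem.1).le hzδ.le
    have hvle : (volume (S ∩ Set.Ioc x₀ b)).toReal ≤ z / K := by
      rw [le_div_iff₀ hKpos, mul_comm]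
      linarith
    have hsp : u b = u x₀ + (volume (S ∩ Set.Ioc x₀ b)).toReal :=
      meas_split S hS hx₀mem.1 hx₀mem.2
    linarith [hx₀]
  -- rewrite the target set as a monotone union
  have hset : {x : ℝ | 0 < x ∧ f x ≤ z} = ⋃ n : ℕ, S ∩ Set.Ioc 0 (n : ℝ) := by
    ext t
    simp only [Set.mem_setOf_eq, Set.mem_iUnion, Set.mem_inter_iff, Set.mem_Ioc, hSdef]
    constructor
    · rintro ⟨ht0, htz⟩
      obtain ⟨n, hn⟩ := exists_nat_ge t
      exact ⟨n, htz, ht0, hn⟩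
    · rintro ⟨n, htz, ht0, -⟩
      exact ⟨ht0, htz⟩
  rw [hset]
  have hmono : Monotone (fun n : ℕ => S ∩ Set.Ioc 0 (n:ℝ)) := fun m n hmn =>
    Set.inter_subset_inter_right _ (Set.Ioc_subset_Ioc le_rfl (Nat.cast_le.2 hmn))
  rw [hmono.directed_le.measure_iUnion]
  refine iSup_le fun n => (Hb n).trans (ENNReal.ofReal_le_ofReal ?_)
  -- arithmetic: m₀ + z / K ≤ C * z ^ (p/2)
  have hppos : (0:ℝ) ≤ z ^ (p/2) := Real.rpow_nonneg hz0.le _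
  have hd1 : (0:ℝ) < δ ^ (-(1/2):ℝ) := Real.rpow_pos_of_pos hδ _
  have hd2 : (0:ℝ) < δ ^ ((1-p)/2) := Real.rpow_pos_of_pos hδ _
  have f1 : z ^ ((p-1)/2) ≤ δ ^ (-(1/2):ℝ) * z ^ (p/2) := by
    rw [show (p-1)/2 = (-(1/2):ℝ) + p/2 by ring, Real.rpow_add hz0]
    exact mul_le_mul_of_nonneg_right
      (Real.rpow_le_rpow_of_nonpos hδ hzδ.le (by norm_num)) hppos
  have f2 : z ^ (1 - p/2) * z ^ ((p-1)/2) ≤ δ ^ ((1-p)/2) * z ^ (p/2) := by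
    rw [← Real.rpow_add hz0, show (1 - p/2) + (p-1)/2 = ((1-p)/2) + p/2 by ring,
      Real.rpow_add hz0]
    exact mul_le_mul_of_nonneg_right
      (Real.rpow_le_rpow_of_nonpos hδ hzδ.le (by linarith)) hppos
  have f3 : Real.sqrt z * z ^ ((p-1)/2) = z ^ (p/2) := by
    rw [Real.sqrt_eq_rpow, ← Real.rpow_add hz0, show (1/2:ℝ) + (p-1)/2 = p/2 by ring]
  have fK : K * z ^ ((p-1)/2) ≤ (δ ^ (-(1/2):ℝ) + δ ^ ((1-p)/2)) * z ^ (p/2) := by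
    have hexp : (δ ^ (-(1/2):ℝ) + δ ^ ((1-p)/2)) * z ^ (p/2)
        = δ ^ (-(1/2):ℝ) * z ^ (p/2) + δ ^ ((1-p)/2) * z ^ (p/2) := by ring
    rcases le_total (z ^ (1 - p/2)) 1 with h | h
    · rw [hKdef, max_eq_left h, one_mul, hexp]
      have := mul_nonneg hd2.le hppos
      linarith
    · rw [hKdef, max_eq_right h, hexp]
      have := mul_nonneg hd1.le hppos
      linarith
  have f4 : z / K ≤ z ^ (p/2) := by
    rw [div_le_iff₀ hKpos]
    have h1 : z ^ (p/2) * z ^ (1 - p/2) = z := by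
      rw [← Real.rpow_add hz0, show p/2 + (1 - p/2) = 1 by ring, Real.rpow_one]
    have h2 := mul_le_mul_of_nonneg_left hKz hppos
    linarith
  have fγ : |γ| * z ^ ((p-1)/2) ≤ |γ| * (δ ^ (-(1/2):ℝ) * z ^ (p/2)) :=
    mul_le_mul_of_nonneg_left f1 (abs_nonneg γ)
  have NUM : (K + β * Real.sqrt z + |γ|) * z ^ ((p-1)/2)
      ≤ (δ ^ (-(1/2):ℝ) + δ ^ ((1-p)/2) + β + |γ| * δ ^ (-(1/2):ℝ)) * z ^ (p/2) := by
    have expand : (K + β * Real.sqrt z + |γ|) * z ^ ((p-1)/2)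
        = K * z ^ ((p-1)/2) + β * (Real.sqrt z * z ^ ((p-1)/2)) + |γ| * z ^ ((p-1)/2) := by
      ring
    have hb3 : β * (Real.sqrt z * z ^ ((p-1)/2)) = β * z ^ (p/2) := by rw [f3]
    have rr : (δ ^ (-(1/2):ℝ) + δ ^ ((1-p)/2) + β + |γ| * δ ^ (-(1/2):ℝ)) * z ^ (p/2)
        = (δ ^ (-(1/2):ℝ) + δ ^ ((1-p)/2)) * z ^ (p/2) + β * z ^ (p/2)
          + |γ| * (δ ^ (-(1/2):ℝ) * z ^ (p/2)) := by ring
    linarith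
  have hdiv : m₀ ≤ (δ ^ (-(1/2):ℝ) + δ ^ ((1-p)/2) + β + |γ| * δ ^ (-(1/2):ℝ)) * z ^ (p/2) / α := by
    rw [hm₀]
    gcongr
  have hCeq : C * z ^ (p/2)
      = (δ ^ (-(1/2):ℝ) + δ ^ ((1-p)/2) + β + |γ| * δ ^ (-(1/2):ℝ)) * z ^ (p/2) / α
        + z ^ (p/2) := by
    rw [hC]; ring
  linarith
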